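/- Lagrange Property from nondegenerate C² data: if U ⊆ ℝ is open, f : U → ℝ is C², and f'(x) f''(x) ≠ 0, then there exists ζ > 0 and a C¹ function Γ : (−ζ,ζ) → ℝ such that for all r ∈ (0,ζ), Γ(r) = sup_{0 < |y−x| ≤ r} |f(x)−f(y)|/|x−y|, and this supremum is attained at some point y_r with 0 < |y_r − x| ≤ r. -/

import Mathlib

/-- The set of Leibniz-ratio values of `f` at `x` over the punctured closed ball of radius `r`. -/
def ratioSet (f : ℝ → ℝ) (x r : ℝ) : Set ℝ :=
  {L : ℝ | ∃ y, 0 < |y - x| ∧ |y - x| ≤ r ∧ L = |f x - f y| / |x - y|}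

open Set Metric intervalIntegral

/-- Fundamental theorem of calculus in parametrized form: the slope of `f` between `x` and `y`
is the average of the derivative along the segment. -/
lemma lag_ftc_slope (f φ : ℝ → ℝ) (hc : Continuous φ) (x y : ℝ)
    (hd : ∀ u ∈ Set.uIcc x y, HasDerivAt f (φ u) u) :
    f y - f x = (y - x) * ∫ t in (0:ℝ)..1, φ (x + t * (y - x)) := by
  by_cases hyx : y = x
  · simp [hyx]
  have hne : y - x ≠ 0 := sub_ne_zero.mpr hyx
  have h1 : ∫ u in x..y, φ u = f y - f x :=
    intervalIntegral.integral_eq_sub_of_hasDerivAt hd (hc.intervalIntegrable _ _)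
  have h2 := intervalIntegral.integral_comp_mul_add (a := (0:ℝ)) (b := 1) φ hne x
  have h3 : (∫ t in (0:ℝ)..1, φ (x + t * (y - x)))
      = (y - x)⁻¹ * (f y - f x) := by
    have : (fun t : ℝ => φ (x + t * (y - x))) = fun t : ℝ => φ ((y - x) * t + x) := by
      funext t; ring_nf
    rw [this]
    rw [h2]
    simp only [mul_zero, zero_add, mul_one, smul_eq_mul]
    rw [sub_add_cancel, h1]
  rw [h3]
  field_simp

/-- Differentiation under the integral sign for the averaged derivative. -/
lemma lag_hasDerivAt_G (ψ ψ' : ℝ → ℝ) (x δ : ℝ)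
    (hψc : Continuous ψ) (hψ'c : Continuous ψ')
    (hder : ∀ z ∈ Metric.ball x δ, HasDerivAt ψ (ψ' z) z)
    (r₀ : ℝ) (hr₀ : |r₀| < δ) :
    HasDerivAt (fun r => ∫ t in (0:ℝ)..1, ψ (x + t * r))
      (∫ t in (0:ℝ)..1, t * ψ' (x + t * r₀)) r₀ := by
  obtain ⟨M, hM⟩ := (isCompact_closedBall x δ).exists_bound_of_continuousOn hψ'c.continuousOn
  have hεpos : 0 < δ - |r₀| := by linarith
  have hmem : ∀ t ∈ Set.uIoc (0:ℝ) 1, ∀ r ∈ Metric.ball r₀ (δ - |r₀|),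
      x + t * r ∈ Metric.ball x δ := by
    intro t ht r hr
    rw [Set.uIoc_of_le (by norm_num : (0:ℝ) ≤ 1)] at ht
    have hrlt : |r| < δ := by
      have := mem_ball_iff_norm.mp hr
      have : |r - r₀| < δ - |r₀| := this
      calc |r| = |r - r₀ + r₀| := by ring_nf
        _ ≤ |r - r₀| + |r₀| := abs_add_le _ _
        _ < δ := by linarith
    have : |t * r| ≤ |r| := by
      rw [abs_mul]
      nlinarith [abs_nonneg r, abs_of_pos ht.1, ht.2, abs_nonneg (t*r)]
    rw [mem_ball_iff_norm, show x + t * r - x = t * r by ring]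
    exact lt_of_le_of_lt this hrlt
  have key := intervalIntegral.hasDerivAt_integral_of_dominated_loc_of_deriv_le
    (F := fun r t => ψ (x + t * r)) (F' := fun r t => t * ψ' (x + t * r))
    (x₀ := r₀) (a := (0:ℝ)) (b := 1) (μ := MeasureTheory.volume)
    (bound := fun _ => M) (Metric.ball_mem_nhds r₀ hεpos)
    (Filter.Eventually.of_forall fun r =>
      ((hψc.comp (by continuity)).aestronglyMeasurable))
    ((hψc.comp (by continuity)).intervalIntegrable _ _)
    ((Continuous.aestronglyMeasurable (by continuity :
        Continuous fun t : ℝ => t * ψ' (x + t * r₀))))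
    (MeasureTheory.ae_of_all _ ?_) (intervalIntegrable_const) (MeasureTheory.ae_of_all _ ?_)
  · exact key.2
  · intro t ht r hr
    have hm := hmem t ht r hr
    have h1 : ‖ψ' (x + t * r)‖ ≤ M := hM _ (Metric.ball_subset_closedBall hm)
    rw [Set.uIoc_of_le (by norm_num : (0:ℝ) ≤ 1)] at ht
    have h2 : |t| ≤ 1 := by rw [abs_of_pos ht.1]; exact ht.2
    calc ‖t * ψ' (x + t * r)‖ = |t| * ‖ψ' (x + t * r)‖ := by
          simp [abs_mul]
      _ ≤ 1 * M := by
          apply mul_le_mul h2 h1 (norm_nonneg _) zero_le_one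
      _ = M := one_mul M
  · intro t ht r hr
    have hm := hmem t ht r hr
    have hin : HasDerivAt (fun ρ : ℝ => x + t * ρ) t r := by
      simpa using ((hasDerivAt_id r).const_mul t).const_add x
    have := (hder _ hm).comp r hin
    simpa [mul_comm, Function.comp_def] using this

theorem lagrange_property_of_C2 (U : Set ℝ) (hU : IsOpen U) (f : ℝ → ℝ)
    (hf : ContDiffOn ℝ 2 f U) (x : ℝ) (hx : x ∈ U)
    (hnd : deriv f x * deriv (deriv f) x ≠ 0) :
    ∃ ζ > 0, Metric.closedBall x ζ ⊆ U ∧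
      ∃ Γ : ℝ → ℝ, ContDiffOn ℝ 1 Γ (Set.Ioo (-ζ) ζ) ∧
        ∀ r ∈ Set.Ioo (0 : ℝ) ζ, IsGreatest (ratioSet f x r) (Γ r) := by
  have hf1 : deriv f x ≠ 0 := left_ne_zero_of_mul hnd
  have hf2 : deriv (deriv f) x ≠ 0 := right_ne_zero_of_mul hnd
  set φ : ℝ → ℝ := deriv f with hφdef
  set φ' : ℝ → ℝ := deriv (deriv f) with hφ'def
  set ε : ℝ := if 0 < deriv f x then 1 else -1 with hεdef
  set s : ℝ := if 0 < deriv f x * deriv (deriv f) x then 1 else -1 with hsdef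
  have hεabs : |ε| = 1 := by rw [hεdef]; split_ifs <;> simp
  have hsabs : |s| = 1 := by rw [hsdef]; split_ifs <;> simp
  have hεε : ε * ε = 1 := by rw [hεdef]; split_ifs <;> norm_num
  have hss : s * s = 1 := by rw [hsdef]; split_ifs <;> norm_num
  have hεφx : 0 < ε * φ x := by
    rw [hεdef]
    rcases hf1.lt_or_gt with h | h
    · rw [if_neg (not_lt.mpr h.le)]; simp only [hφdef]; linarith
    · rw [if_pos h]; simpa [hφdef] using h
  have hsεφ'x : 0 < s * (ε * φ' x) := by
    rw [hεdef, hsdef, hφ'def]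
    rcases hf1.lt_or_gt with h1 | h1 <;> rcases hf2.lt_or_gt with h2 | h2 <;>
      [skip; skip; skip; skip] <;>
      · split_ifs <;> nlinarith
  have hφC1 : ContDiffOn ℝ 1 φ U := hf.deriv_of_isOpen hU (by norm_num)
  have hφcont : ContinuousOn φ U := hφC1.continuousOn
  have hφ'cont : ContinuousOn φ' U := hφC1.continuousOn_deriv_of_isOpen hU le_rfl
  have hφdiff : ∀ z ∈ U, HasDerivAt φ (φ' z) z := fun z hz =>
    ((hφC1.differentiableOn one_ne_zero).differentiableAt (hU.mem_nhds hz)).hasDerivAt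
  have hfdiff : ∀ z ∈ U, HasDerivAt f (φ z) z := fun z hz =>
    ((hf.differentiableOn (by norm_num)).differentiableAt (hU.mem_nhds hz)).hasDerivAt
  have e1 : ∀ᶠ z in nhds x, z ∈ U := hU.mem_nhds hx
  have cφ : ContinuousAt φ x := hφcont.continuousAt (hU.mem_nhds hx)
  have cφ' : ContinuousAt φ' x := hφ'cont.continuousAt (hU.mem_nhds hx)
  have e2 : ∀ᶠ z in nhds x, 0 < ε * φ z :=
    ((continuousAt_const.mul cφ).eventually_mem (Ioi_mem_nhds hεφx)).mono fun z hz => hz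
  have e3 : ∀ᶠ z in nhds x, 0 < s * (ε * φ' z) :=
    ((continuousAt_const.mul (continuousAt_const.mul cφ')).eventually_mem
      (Ioi_mem_nhds hsεφ'x)).mono fun z hz => hz
  obtain ⟨δ', hδ'pos, hδ'⟩ := Metric.eventually_nhds_iff_ball.mp (e1.and (e2.and e3))
  set δ : ℝ := δ' / 2 with hδdef
  have hδpos : 0 < δ := by positivity
  have hballI : Metric.closedBall x δ ⊆ Metric.ball x δ' :=
    Metric.closedBall_subset_ball (by rw [hδdef]; linarith)
  have hU' : ∀ z ∈ Metric.closedBall x δ, z ∈ U := fun z hz => (hδ' _ (hballI hz)).1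
  have hpos1 : ∀ z ∈ Metric.closedBall x δ, 0 < ε * φ z := fun z hz => (hδ' _ (hballI hz)).2.1
  have hpos2 : ∀ z ∈ Metric.closedBall x δ, 0 < s * (ε * φ' z) :=
    fun z hz => (hδ' _ (hballI hz)).2.2
  -- clamp
  set c : ℝ → ℝ := fun z => max (x - δ) (min (x + δ) z) with hcdef
  have hcont_c : Continuous c := continuous_const.max (continuous_const.min continuous_id)
  have hcmem : ∀ z, c z ∈ Metric.closedBall x δ := by
    intro z
    rw [Real.closedBall_eq_Icc]
    exact ⟨le_max_left _ _, max_le (by linarith) (min_le_left _ _)⟩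
  have hceq : ∀ z ∈ Metric.closedBall x δ, c z = z := by
    intro z hz
    rw [Real.closedBall_eq_Icc] at hz
    rw [hcdef]
    simp only [min_eq_right hz.2, max_eq_right hz.1]
  set ψ : ℝ → ℝ := fun z => φ (c z) with hψdef
  set ψ' : ℝ → ℝ := fun z => φ' (c z) with hψ'def
  have hψcont : Continuous ψ := hφcont.comp_continuous hcont_c fun z => hU' _ (hcmem z)
  have hψ'cont : Continuous ψ' := hφ'cont.comp_continuous hcont_c fun z => hU' _ (hcmem z)
  have hψeq : ∀ z ∈ Metric.closedBall x δ, ψ z = φ z := fun z hz => by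
    rw [hψdef]; simp only [hceq z hz]
  have hψ'eq : ∀ z ∈ Metric.closedBall x δ, ψ' z = φ' z := fun z hz => by
    rw [hψ'def]; simp only [hceq z hz]
  have hψder : ∀ z ∈ Metric.ball x δ, HasDerivAt ψ (ψ' z) z := by
    intro z hz
    rw [hψ'eq z (Metric.ball_subset_closedBall hz)]
    apply (hφdiff z (hU' _ (Metric.ball_subset_closedBall hz))).congr_of_eventuallyEq
    filter_upwards [Metric.isOpen_ball.mem_nhds hz] with w hw
    exact hψeq w (Metric.ball_subset_closedBall hw)
  -- the averaged-slope function and its derivative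
  set G : ℝ → ℝ := fun r => ∫ t in (0:ℝ)..1, ψ (x + t * r) with hGdef
  have hGder : ∀ r ∈ Set.Ioo (-δ) δ,
      HasDerivAt G (∫ t in (0:ℝ)..1, t * ψ' (x + t * r)) r := fun r hr =>
    lag_hasDerivAt_G ψ ψ' x δ hψcont hψ'cont hψder r (abs_lt.mpr ⟨hr.1, hr.2⟩)
  have hDcont : Continuous fun r : ℝ => ∫ t in (0:ℝ)..1, t * ψ' (x + t * r) := by
    apply intervalIntegral.continuous_parametric_intervalIntegral_of_continuous
      (f := fun (r : ℝ) (t : ℝ) => t * ψ' (x + t * r)) (s := fun _ : ℝ => (1:ℝ))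
    · exact continuous_snd.mul (hψ'cont.comp
        (continuous_const.add (continuous_snd.mul continuous_fst)))
    · exact continuous_const
  have hGC1 : ContDiffOn ℝ 1 G (Set.Ioo (-δ) δ) := by
    rw [show (1 : WithTop ℕ∞) = 0 + 1 from rfl,
      contDiffOn_succ_iff_deriv_of_isOpen isOpen_Ioo]
    refine ⟨fun r hr => (hGder r hr).differentiableAt.differentiableWithinAt, by simp, ?_⟩
    rw [contDiffOn_zero]
    exact hDcont.continuousOn.congr fun r hr => (hGder r hr).deriv
  -- FTC identity
  have key : ∀ y ∈ Metric.closedBall x δ,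
      f y - f x = (y - x) * ∫ t in (0:ℝ)..1, ψ (x + t * (y - x)) := by
    intro y hy
    apply lag_ftc_slope f ψ hψcont
    intro u hu
    have huB : u ∈ Metric.closedBall x δ := by
      rw [Real.closedBall_eq_Icc] at hy ⊢
      have : Set.uIcc x y ⊆ Set.Icc (x - δ) (x + δ) :=
        Set.uIcc_subset_Icc ⟨by linarith, by linarith⟩ hy
      exact this hu
    rw [hψeq u huB]
    exact hfdiff u (hU' u huB)
  -- segment containment helper
  have hseg : ∀ (q : ℝ), |q| ≤ δ → ∀ t ∈ Set.Icc (0:ℝ) 1, x + t * q ∈ Metric.closedBall x δ := by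
    intro q hq t ht
    rw [Metric.mem_closedBall, Real.dist_eq, show x + t * q - x = t * q by ring, abs_mul]
    calc |t| * |q| ≤ 1 * |q| := by
          apply mul_le_mul_of_nonneg_right _ (abs_nonneg q)
          rw [abs_of_nonneg ht.1]; exact ht.2
      _ ≤ δ := by linarith
  -- nonnegativity: the averaged slope has sign ε
  have hval : ∀ y ∈ Metric.closedBall x δ, y ≠ x →
      |f x - f y| / |x - y| = ε * ∫ t in (0:ℝ)..1, ψ (x + t * (y - x)) := by
    intro y hy hyx
    set H : ℝ := ∫ t in (0:ℝ)..1, ψ (x + t * (y - x)) with hHdef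
    have hqle : |y - x| ≤ δ := by
      rw [Metric.mem_closedBall, Real.dist_eq] at hy; exact hy
    have hnn : 0 ≤ ε * H := by
      rw [hHdef, ← intervalIntegral.integral_const_mul]
      apply intervalIntegral.integral_nonneg (by norm_num)
      intro t ht
      have hm := hseg (y - x) hqle t ht
      rw [hψeq _ hm]
      exact (hpos1 _ hm).le
    have habsH : |H| = ε * H := by
      have : |ε * H| = ε * H := abs_of_nonneg hnn
      rwa [abs_mul, hεabs, one_mul] at this
    have hfy : |f x - f y| = |H| * |x - y| := by
      rw [abs_sub_comm, key y hy, abs_mul, abs_sub_comm y x]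
      ring
    rw [hfy, mul_div_assoc, div_self (by
      simpa [abs_sub_comm, sub_eq_zero] using fun h => hyx h.symm ), mul_one, habsH]
  -- monotone comparison function
  set ρ : ℝ → ℝ := fun z => ε * ψ (x + s * z) with hρdef
  have hρc : Continuous ρ := continuous_const.mul (hψcont.comp (continuous_const.add (continuous_const.mul continuous_id)))
  have hρmono : MonotoneOn ρ (Set.Icc (-δ) δ) := by
    apply (strictMonoOn_of_deriv_pos (convex_Icc _ _) hρc.continuousOn ?_).monotoneOn
    intro z hz
    rw [interior_Icc] at hz
    have hmem : x + s * z ∈ Metric.ball x δ := by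
      rw [Metric.mem_ball, Real.dist_eq, show x + s * z - x = s * z by ring, abs_mul, hsabs,
        one_mul, abs_lt]
      exact ⟨hz.1, hz.2⟩
    have hder : HasDerivAt ρ (ε * (ψ' (x + s * z) * s)) z := by
      have hin : HasDerivAt (fun z : ℝ => x + s * z) s z := by
        simpa using ((hasDerivAt_id z).const_mul s).const_add x
      exact ((hψder _ hmem).comp z hin).const_mul ε
    rw [hder.deriv]
    have h2 := hpos2 _ (Metric.ball_subset_closedBall hmem)
    rw [← hψ'eq _ (Metric.ball_subset_closedBall hmem)] at h2
    nlinarith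
  -- conclusion
  refine ⟨δ / 2, by positivity, ?_, fun r => ε * G (s * r), ?_, ?_⟩
  · exact fun z hz => hU' z (Metric.closedBall_subset_closedBall (by linarith) hz)
  · have hmaps : Set.MapsTo (fun r : ℝ => s * r) (Set.Ioo (-(δ/2)) (δ/2)) (Set.Ioo (-δ) δ) := by
      intro r hr
      have : |s * r| < δ := by
        rw [abs_mul, hsabs, one_mul, abs_lt]; constructor <;> [linarith [hr.1]; linarith [hr.2]]
      rw [Set.mem_Ioo, ← abs_lt]; exact this
    exact contDiffOn_const.mul
      (hGC1.comp ((contDiff_const.mul contDiff_id).contDiffOn) hmaps)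
  · rintro r ⟨hr0, hrζ⟩
    have hrδ : r < δ := by linarith
    set y₀ : ℝ := x + s * r with hy₀def
    have hy₀x : y₀ - x = s * r := by rw [hy₀def]; ring
    have hy₀abs : |y₀ - x| = r := by
      rw [hy₀x, abs_mul, hsabs, one_mul, abs_of_pos hr0]
    have hy₀ball : y₀ ∈ Metric.closedBall x δ := by
      rw [Metric.mem_closedBall, Real.dist_eq, hy₀abs]; linarith
    have hy₀ne : y₀ ≠ x := by
      intro h
      rw [h, sub_self, abs_zero] at hy₀abs; exact hr0.ne hy₀abs
    have hΓval : ε * G (s * r) = |f x - f y₀| / |x - y₀| := by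
      rw [hval y₀ hy₀ball hy₀ne, hy₀x]
    constructor
    · exact ⟨y₀, by rw [hy₀abs]; exact hr0, by rw [hy₀abs], by simpa using hΓval⟩
    · rintro L ⟨y, hy1, hy2, rfl⟩
      have hyball : y ∈ Metric.closedBall x δ := by
        rw [Metric.mem_closedBall, Real.dist_eq]; linarith
      have hyne : y ≠ x := by
        intro h; rw [h, sub_self, abs_zero] at hy1; exact lt_irrefl _ hy1
      rw [hval y hyball hyne]
      show ε * (∫ t in (0:ℝ)..1, ψ (x + t * (y - x))) ≤ ε * ∫ t in (0:ℝ)..1, ψ (x + t * (s * r))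
      rw [← intervalIntegral.integral_const_mul, ← intervalIntegral.integral_const_mul]
      have hrw1 : ∀ t : ℝ, ε * ψ (x + t * (y - x)) = ρ (t * (s * (y - x))) := by
        intro t
        have h : x + s * (t * (s * (y - x))) = x + t * (y - x) := by
          linear_combination t * (y - x) * hss
        rw [hρdef]
        simp only [h]
      have hrw2 : ∀ t : ℝ, ε * ψ (x + t * (s * r)) = ρ (t * r) := by
        intro t
        have h : x + s * (t * r) = x + t * (s * r) := by ring
        rw [hρdef]
        simp only [h]
      simp only [hrw1, hrw2]
      have habs : |s * (y - x)| ≤ r := by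
        rw [abs_mul, hsabs, one_mul]; exact hy2
      apply intervalIntegral.integral_mono_on (by norm_num)
      · exact (hρc.comp (continuous_id.mul continuous_const)).intervalIntegrable _ _
      · exact (hρc.comp (continuous_id.mul continuous_const)).intervalIntegrable _ _
      · intro t ht
        have ht1 : 0 ≤ t := ht.1
        have ht2 : t ≤ 1 := ht.2
        have hb : ∀ q : ℝ, |q| ≤ r → t * q ∈ Set.Icc (-δ) δ := by
          intro q hqr
          rw [Set.mem_Icc, ← abs_le, abs_mul, abs_of_nonneg ht1]
          calc t * |q| ≤ 1 * |q| := mul_le_mul_of_nonneg_right ht2 (abs_nonneg _)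
            _ = |q| := one_mul _
            _ ≤ δ := le_trans hqr (by linarith)
        have h1 : t * (s * (y - x)) ∈ Set.Icc (-δ) δ := hb _ habs
        have h2 : t * r ∈ Set.Icc (-δ) δ := hb r (by rw [abs_of_pos hr0])
        apply hρmono h1 h2
        apply mul_le_mul_of_nonneg_left _ ht1
        exact le_trans (le_abs_self _) habs
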